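/- arXiv:1801.08852 — 5 statements merged into one kernel-verified Lean document; each statement's English description precedes it below -/
import Mathlib

section
/- Let n ≥ 1, μ ∈ ℝ^n, let Σ ∈ ℝ^{n×n} be a symmetric positive semidefinite matrix, and let ρ be a Borel measure on [0,∞)^n \ {0} satisfying ∫ min(‖t‖,1) ρ(dt) < ∞. Define, for θ ∈ ℝ^n, Ψ(θ) = ∫ (exp(i⟨θ, t⋄μ⟩ − ½‖θ‖²_{t⋄Σ}) − 1) ρ(dt) and Ψ*(θ) = ∫ (exp(−½‖θ‖²_{t⋄Σ}) − 1) ρ(dt). Then both integrals converge absolutely and Re Ψ(θ) ≤ Ψ*(θ) for all θ ∈ ℝ^n. -/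
open MeasureTheory Complex

noncomputable section

/-- Euclidean inner product on `ℝ^n`. -/
def dot {n : ℕ} (x y : Fin n → ℝ) : ℝ := ∑ k, x k * y k

/-- Quadratic form `‖θ‖²_A = θ A θᵀ`. -/
def quad {n : ℕ} (A : Matrix (Fin n) (Fin n) ℝ) (θ : Fin n → ℝ) : ℝ :=
  ∑ k, ∑ l, θ k * A k l * θ l

/-- Outer product `t ⋄ μ` of vectors, `(t ⋄ μ)_k = t_k μ_k`. -/
def diaV {n : ℕ} (t μ : Fin n → ℝ) : Fin n → ℝ := fun k => t k * μ k

/-- Outer product `t ⋄ Σ` of a vector and a matrix, `(t ⋄ Σ)_{kl} = Σ_{kl} min(t_k, t_l)`. -/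
def diaM {n : ℕ} (t : Fin n → ℝ) (A : Matrix (Fin n) (Fin n) ℝ) :
    Matrix (Fin n) (Fin n) ℝ := Matrix.of fun k l => A k l * min (t k) (t l)

/-! ### Auxiliary lemmas -/

lemma quad_nonneg {n : ℕ} {S : Matrix (Fin n) (Fin n) ℝ} (hS : S.PosSemidef)
    (x : Fin n → ℝ) : 0 ≤ quad S x := by
  have h := hS.dotProduct_mulVec_nonneg x
  simpa [quad, dotProduct, Matrix.mulVec, Finset.mul_sum, mul_assoc] using h

lemma ind_mul_ind (a b s : ℝ) :
    (Set.Ioo (0:ℝ) a).indicator (1 : ℝ → ℝ) s * (Set.Ioo 0 b).indicator (1 : ℝ → ℝ) s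
      = (Set.Ioo (0:ℝ) (min a b)).indicator (1 : ℝ → ℝ) s := by
  simp only [Set.indicator_apply, Set.mem_Ioo, Pi.one_apply, lt_min_iff]
  split_ifs <;> simp_all

lemma min_eq_integral (a b : ℝ) (ha : 0 ≤ a) (hb : 0 ≤ b) :
    ∫ s, (Set.Ioo (0:ℝ) a).indicator (1 : ℝ → ℝ) s * (Set.Ioo 0 b).indicator (1 : ℝ → ℝ) s
      = min a b := by
  simp only [ind_mul_ind]
  rw [integral_indicator_one measurableSet_Ioo, Real.volume_real_Ioo_of_le (by simp [ha, hb])]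
  simp

lemma quad_diaM_nonneg {n : ℕ} {S : Matrix (Fin n) (Fin n) ℝ} (hS : S.PosSemidef)
    {t : Fin n → ℝ} (ht : ∀ k, 0 ≤ t k) (θ : Fin n → ℝ) :
    0 ≤ quad (diaM t S) θ := by
  have hIntTerm : ∀ (c a b : ℝ), Integrable (fun s =>
      c * ((Set.Ioo (0:ℝ) a).indicator (1 : ℝ → ℝ) s
        * (Set.Ioo 0 b).indicator (1 : ℝ → ℝ) s)) := by
    intro c a b
    simp only [ind_mul_ind]
    have : (fun s => c * (Set.Ioo (0:ℝ) (min a b)).indicator (1 : ℝ → ℝ) s)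
        = (Set.Ioo (0:ℝ) (min a b)).indicator (fun _ => c) := by
      funext s; by_cases h : s ∈ Set.Ioo (0:ℝ) (min a b) <;> simp [Set.indicator_apply, h]
    rw [this, integrable_indicator_iff measurableSet_Ioo]
    exact integrableOn_const measure_Ioo_lt_top.ne
  have key : quad (diaM t S) θ = ∫ s, quad S
      (fun k => (Set.Ioo (0:ℝ) (t k)).indicator (fun _ => θ k) s) := by
    have hrw : (fun s => quad S (fun k => (Set.Ioo (0:ℝ) (t k)).indicator (fun _ => θ k) s))
        = fun s => ∑ k, ∑ l, (θ k * S k l * θ l) *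
            ((Set.Ioo (0:ℝ) (t k)).indicator (1 : ℝ → ℝ) s
              * (Set.Ioo 0 (t l)).indicator (1 : ℝ → ℝ) s) := by
      funext s
      refine Finset.sum_congr rfl fun k _ => Finset.sum_congr rfl fun l _ => ?_
      simp only [Set.indicator_apply, Pi.one_apply]
      split_ifs <;> ring
    rw [hrw, integral_finset_sum _ (fun k _ => (integrable_finset_sum _
      (fun l _ => hIntTerm _ _ _))), ]
    refine Finset.sum_congr rfl fun k _ => ?_
    rw [integral_finset_sum _ (fun l _ => hIntTerm _ _ _)]
    refine Finset.sum_congr rfl fun l _ => ?_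
    rw [integral_const_mul, min_eq_integral _ _ (ht k) (ht l)]
    simp only [diaM, Matrix.of_apply]; ring
  rw [key]
  exact integral_nonneg fun s => quad_nonneg hS _

lemma norm_exp_sub_one_le_two {z : ℂ} (hz : z.re ≤ 0) :
    ‖Complex.exp z - 1‖ ≤ 2 := by
  calc ‖Complex.exp z - 1‖ ≤ ‖Complex.exp z‖ + ‖(1:ℂ)‖ := by
        simpa using norm_sub_le (Complex.exp z) 1
    _ ≤ 1 + 1 := by
        rw [Complex.norm_exp]
        simp [Real.exp_le_one_iff.2 hz]
    _ = 2 := by norm_num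

lemma norm_exp_sub_one_le_two_mul {z : ℂ} (hz : z.re ≤ 0) :
    ‖Complex.exp z - 1‖ ≤ 2 * ‖z‖ := by
  by_cases h : ‖z‖ ≤ 1
  · exact Complex.norm_exp_sub_one_le h
  · have h2 := norm_exp_sub_one_le_two hz
    nlinarith

lemma exp_split (a q : ℝ) :
    Complex.I * (a:ℂ) - (q:ℂ)/2 = Complex.ofReal (-(q/2)) + (a:ℝ) * Complex.I := by
  push_cast; ring

lemma exp_re_calc (a q : ℝ) :
    (Complex.exp (Complex.I * (a:ℂ) - (q:ℂ)/2) - 1).re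
      = Real.exp (-(q/2)) * Real.cos a - 1 := by
  rw [exp_split]
  simp [Complex.exp_re]

lemma norm_calc2 (a q : ℝ) (hq : 0 ≤ q) :
    ‖Complex.exp (Complex.I * (a:ℂ) - (q:ℂ)/2) - 1‖ ≤ 2 := by
  apply norm_exp_sub_one_le_two
  rw [exp_split]
  simp
  positivity

lemma norm_calc_lin (a q : ℝ) (hq : 0 ≤ q) :
    ‖Complex.exp (Complex.I * (a:ℂ) - (q:ℂ)/2) - 1‖ ≤ 2 * (|a| + q/2) := by
  have h1 : ‖Complex.I * (a:ℂ) - (q:ℂ)/2‖ ≤ |a| + q/2 := by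
    rw [exp_split]
    calc ‖Complex.ofReal (-(q/2)) + (a:ℝ) * Complex.I‖
        ≤ ‖Complex.ofReal (-(q/2))‖ + ‖(a:ℝ) * Complex.I‖ :=
          norm_add_le _ _
      _ ≤ |a| + q/2 := by
          rw [norm_mul, Complex.norm_I, Complex.norm_real, Complex.norm_real, Real.norm_eq_abs,
              Real.norm_eq_abs, abs_neg,
            _root_.abs_of_nonneg (show (0:ℝ) ≤ q/2 by positivity)]
          simp only [mul_one]
          linarith
  have h2 : (Complex.I * (a:ℂ) - (q:ℂ)/2).re ≤ 0 := by
    rw [exp_split]; simp; positivity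
  calc ‖Complex.exp (Complex.I * (a:ℂ) - (q:ℂ)/2) - 1‖
      ≤ 2 * ‖Complex.I * (a:ℂ) - (q:ℂ)/2‖ := norm_exp_sub_one_le_two_mul h2
    _ ≤ 2 * (|a| + q/2) := by linarith

/-- The integrands in the Lévy exponents `Ψ` (of `B ⊙ T`) and `Ψ*` (of `B* ⊙ T`) are
absolutely integrable with respect to the Lévy measure `ρ`, and `Re Ψ(θ) ≤ Ψ*(θ)`. -/
theorem stmt0 {n : ℕ} (hn : 1 ≤ n) (μ : Fin n → ℝ)
    (S : Matrix (Fin n) (Fin n) ℝ) (hS : S.PosSemidef)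
    (ρ : Measure (Fin n → ℝ))
    (hsupp : ρ {t | ¬ ((∀ k, 0 ≤ t k) ∧ t ≠ 0)} = 0)
    (hmom : ∫⁻ t, ENNReal.ofReal (min (Real.sqrt (∑ k, (t k) ^ 2)) 1) ∂ρ < ⊤) :
    ∀ θ : Fin n → ℝ,
      Integrable (fun t => Complex.exp (Complex.I * (dot θ (diaV t μ) : ℂ) -
          (quad (diaM t S) θ : ℂ) / 2) - 1) ρ ∧
      Integrable (fun t => Real.exp (-(quad (diaM t S) θ) / 2) - 1) ρ ∧
      (∫ t, (Complex.exp (Complex.I * (dot θ (diaV t μ) : ℂ) -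
          (quad (diaM t S) θ : ℂ) / 2) - 1) ∂ρ).re ≤
        ∫ t, (Real.exp (-(quad (diaM t S) θ) / 2) - 1) ∂ρ := by
  intro θ
  set a : (Fin n → ℝ) → ℝ := fun t => dot θ (diaV t μ) with ha_def
  set q : (Fin n → ℝ) → ℝ := fun t => quad (diaM t S) θ with hq_def
  set nt : (Fin n → ℝ) → ℝ := fun t => Real.sqrt (∑ k, (t k) ^ 2) with hnt_def
  set C1 : ℝ := ∑ k, |θ k * μ k| with hC1_def
  set C2 : ℝ := ∑ k, ∑ l, |θ k * S k l * θ l| with hC2_def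
  set K : ℝ := max 2 (2 * (C1 + C2)) with hK_def
  have hC1 : 0 ≤ C1 := Finset.sum_nonneg fun k _ => abs_nonneg _
  have hC2 : 0 ≤ C2 := Finset.sum_nonneg fun k _ => Finset.sum_nonneg fun l _ => abs_nonneg _
  have hK2 : (2:ℝ) ≤ K := le_max_left _ _
  have hKC : 2 * (C1 + C2) ≤ K := le_max_right _ _
  have hK0 : (0:ℝ) ≤ K := by linarith
  have hnt : ∀ t, 0 ≤ nt t := fun t => Real.sqrt_nonneg _
  have htk : ∀ (t : Fin n → ℝ), (∀ k, 0 ≤ t k) → ∀ k, t k ≤ nt t := by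
    intro t ht k
    rw [show t k = Real.sqrt ((t k) ^ 2) from (Real.sqrt_sq (ht k)).symm]
    exact Real.sqrt_le_sqrt (Finset.single_le_sum (fun i _ => sq_nonneg (t i))
      (Finset.mem_univ k))
  have ha : ∀ (t : Fin n → ℝ), (∀ k, 0 ≤ t k) → |a t| ≤ C1 * nt t := by
    intro t ht
    calc |a t| ≤ ∑ k, |θ k * (t k * μ k)| := Finset.abs_sum_le_sum_abs _ _
      _ ≤ ∑ k, |θ k * μ k| * nt t := by
          refine Finset.sum_le_sum fun k _ => ?_
          rw [show θ k * (t k * μ k) = (θ k * μ k) * t k from by ring, abs_mul,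
            _root_.abs_of_nonneg (ht k)]
          exact mul_le_mul_of_nonneg_left (htk t ht k) (abs_nonneg _)
      _ = C1 * nt t := (Finset.sum_mul _ _ _).symm
  have hqb : ∀ (t : Fin n → ℝ), (∀ k, 0 ≤ t k) → q t ≤ C2 * nt t := by
    intro t ht
    calc q t ≤ ∑ k, ∑ l, |θ k * S k l * θ l| * nt t := by
          refine Finset.sum_le_sum fun k _ => Finset.sum_le_sum fun l _ => ?_
          calc θ k * diaM t S k l * θ l ≤ |θ k * diaM t S k l * θ l| := le_abs_self _
            _ = |θ k * S k l * θ l| * min (t k) (t l) := by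
                rw [show θ k * diaM t S k l * θ l
                    = (θ k * S k l * θ l) * min (t k) (t l) from by
                      simp only [diaM, Matrix.of_apply]; ring, abs_mul,
                  _root_.abs_of_nonneg (le_min (ht k) (ht l))]
            _ ≤ |θ k * S k l * θ l| * nt t :=
                mul_le_mul_of_nonneg_left (le_trans (min_le_left _ _) (htk t ht k))
                  (abs_nonneg _)
      _ = C2 * nt t := by
          rw [hC2_def, Finset.sum_mul]
          exact Finset.sum_congr rfl fun k _ => (Finset.sum_mul _ _ _).symm
  have hq0 : ∀ (t : Fin n → ℝ), (∀ k, 0 ≤ t k) → 0 ≤ q t :=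
    fun t ht => quad_diaM_nonneg hS ht θ
  -- continuity
  have contA : Continuous a := by
    unfold a; unfold dot diaV
    exact continuous_finset_sum _ fun k _ =>
      continuous_const.mul ((continuous_apply k).mul continuous_const)
  have contQ : Continuous q := by
    unfold q; unfold quad diaM
    refine continuous_finset_sum _ fun k _ => continuous_finset_sum _ fun l _ => ?_
    simp only [Matrix.of_apply]
    exact (continuous_const.mul (continuous_const.mul
      ((continuous_apply k).min (continuous_apply l)))).mul continuous_const
  have contNT : Continuous nt := by
    unfold nt
    exact Real.continuous_sqrt.comp (continuous_finset_sum _ fun k _ =>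
      (continuous_apply k).pow 2)
  have contF : Continuous fun t => Complex.exp (Complex.I * (a t : ℂ) - (q t : ℂ)/2) - 1 := by
    refine Continuous.sub ?_ continuous_const
    exact Complex.continuous_exp.comp
      ((continuous_const.mul (Complex.continuous_ofReal.comp contA)).sub
        ((Complex.continuous_ofReal.comp contQ).div_const 2))
  have contG : Continuous fun t => Real.exp (-(q t) / 2) - 1 :=
    (Real.continuous_exp.comp (contQ.neg.div_const 2)).sub continuous_const
  -- the dominating function is integrable
  have hgint : Integrable (fun t => K * min (nt t) 1) ρ := by
    refine ⟨(continuous_const.mul (contNT.min continuous_const)).aestronglyMeasurable, ?_⟩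
    rw [hasFiniteIntegral_iff_ofReal (Filter.Eventually.of_forall fun t =>
      mul_nonneg hK0 (le_min (hnt t) zero_le_one))]
    have hrw : ∀ t : Fin n → ℝ, ENNReal.ofReal (K * min (nt t) 1)
        = ENNReal.ofReal K * ENNReal.ofReal (min (nt t) 1) :=
      fun t => ENNReal.ofReal_mul hK0
    simp only [hrw]
    rw [lintegral_const_mul _ ((contNT.min continuous_const).measurable.ennreal_ofReal)]
    exact ENNReal.mul_lt_top ENNReal.ofReal_lt_top hmom
  -- almost-everywhere positivity of t
  have hae : ∀ᵐ t ∂ρ, (∀ k, 0 ≤ t k) ∧ t ≠ 0 := MeasureTheory.ae_iff.mpr hsupp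
  -- a.e. bounds
  have hfbound : ∀ᵐ t ∂ρ, ‖Complex.exp (Complex.I * (a t : ℂ) - (q t : ℂ)/2) - 1‖
      ≤ K * min (nt t) 1 := by
    filter_upwards [hae] with t ht
    obtain ⟨ht0, -⟩ := ht
    have h2 := norm_calc2 (a t) (q t) (hq0 t ht0)
    have hl := norm_calc_lin (a t) (q t) (hq0 t ht0)
    have ha' := ha t ht0
    have hq' := hqb t ht0
    rcases le_total (nt t) 1 with h | h
    · rw [min_eq_left h]
      have habs : |a t| + q t / 2 ≤ (C1 + C2) * nt t := by
        have := hq0 t ht0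
        nlinarith [hnt t]
      nlinarith [hnt t]
    · rw [min_eq_right h]
      linarith
  have hgbound : ∀ᵐ t ∂ρ, ‖Real.exp (-(q t) / 2) - 1‖ ≤ K * min (nt t) 1 := by
    filter_upwards [hae] with t ht
    obtain ⟨ht0, -⟩ := ht
    have hq' := hqb t ht0
    have hq0' := hq0 t ht0
    have hle1 : Real.exp (-(q t) / 2) ≤ 1 := Real.exp_le_one_iff.2 (by linarith)
    have hge : -(q t) / 2 + 1 ≤ Real.exp (-(q t) / 2) := Real.add_one_le_exp _
    rw [Real.norm_eq_abs, abs_of_nonpos (by linarith)]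
    rcases le_total (nt t) 1 with h | h
    · rw [min_eq_left h]
      nlinarith [hnt t]
    · rw [min_eq_right h]
      have : 0 < Real.exp (-(q t) / 2) := Real.exp_pos _
      linarith
  have hf : Integrable (fun t => Complex.exp (Complex.I * (a t : ℂ) - (q t : ℂ)/2) - 1) ρ :=
    Integrable.mono' hgint contF.aestronglyMeasurable hfbound
  have hg : Integrable (fun t => Real.exp (-(q t) / 2) - 1) ρ :=
    Integrable.mono' hgint contG.aestronglyMeasurable hgbound
  refine ⟨hf, hg, ?_⟩
  have hre : (∫ t, (Complex.exp (Complex.I * (a t : ℂ) - (q t : ℂ)/2) - 1) ∂ρ).re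
      = ∫ t, (Complex.exp (Complex.I * (a t : ℂ) - (q t : ℂ)/2) - 1).re ∂ρ := by
    have := integral_re hf
    simpa using this.symm
  rw [hre]
  refine integral_mono ?_ hg ?_
  · simpa using hf.re
  · intro t
    show (Complex.exp (Complex.I * (a t : ℂ) - (q t : ℂ)/2) - 1).re ≤ Real.exp (-(q t)/2) - 1
    rw [exp_re_calc (a t) (q t)]
    have hc := Real.cos_le_one (a t)
    have he := Real.exp_pos (-(q t / 2))
    have : Real.exp (-(q t) / 2) = Real.exp (-(q t / 2)) := by rw [neg_div]
    rw [this]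
    nlinarith
end
end

section
/- Let n ≥ 1, μ, m ∈ ℝ^n, let Σ ∈ ℝ^{n×n} be a symmetric positive semidefinite matrix, and let ρ be a Borel measure on [0,∞)^n \ {0} satisfying ∫ min(‖t‖,1) ρ(dt) < ∞. Define Ψ(θ) = ∫ (exp(i⟨θ, t⋄μ⟩ − ½‖θ‖²_{t⋄Σ}) − 1) ρ(dt) and Ψ*(θ) = ∫ (exp(−½‖θ‖²_{t⋄Σ}) − 1) ρ(dt) for θ ∈ ℝ^n. Fix s ≥ 0 and p > 0. If the function θ ↦ exp(s Ψ*(θ)) belongs to L^p(ℝ^n) (with respect to Lebesgue measure), then the function θ ↦ exp(i s ⟨θ, m⟩ + s Ψ(θ)) also belongs to L^p(ℝ^n), i.e. θ ↦ |exp(i s ⟨θ, m⟩ + s Ψ(θ))|^p is Lebesgue integrable. -/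
open MeasureTheory Complex

noncomputable section

/-- Lévy exponent `Ψ` of the weak subordination `B ⊙ T`, `B ~ BM^n(μ,Σ)`. -/
def Ψws {n : ℕ} (μ : Fin n → ℝ) (S : Matrix (Fin n) (Fin n) ℝ)
    (ρ : Measure (Fin n → ℝ)) (θ : Fin n → ℝ) : ℂ :=
  ∫ t, (Complex.exp (Complex.I * (dot θ (diaV t μ) : ℂ) -
      (quad (diaM t S) θ : ℂ) / 2) - 1) ∂ρ

/-- Lévy exponent `Ψ*` of `B* ⊙ T`, `B* ~ BM^n(0,Σ)`. -/
def Ψstar {n : ℕ} (S : Matrix (Fin n) (Fin n) ℝ)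
    (ρ : Measure (Fin n → ℝ)) (θ : Fin n → ℝ) : ℝ :=
  ∫ t, (Real.exp (-(quad (diaM t S) θ) / 2) - 1) ∂ρ

/-! ### Auxiliary lemmas -/

section Aux

lemma aux_quad_psd {n : ℕ} (S : Matrix (Fin n) (Fin n) ℝ) (hS : S.PosSemidef)
    (v : Fin n → ℝ) : 0 ≤ ∑ k, ∑ l, v k * S k l * v l := by
  have h := hS.dotProduct_mulVec_nonneg v
  simp only [dotProduct, Matrix.mulVec, RCLike.star_def, starRingEnd_apply,
    star_trivial] at h
  refine h.trans_eq ?_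
  symm
  refine Finset.sum_congr rfl fun k _ => ?_
  rw [Finset.mul_sum]
  exact Finset.sum_congr rfl fun l _ => by ring

/-- The quadratic form of `t ⋄ S` is nonnegative when `t ≥ 0` and `S` is psd. -/
lemma aux_quad_diaM_nonneg {n : ℕ} (S : Matrix (Fin n) (Fin n) ℝ) (hS : S.PosSemidef)
    (t θ : Fin n → ℝ) (ht : ∀ k, 0 ≤ t k) : 0 ≤ quad (diaM t S) θ := by
  classical
  set M : ℝ := ∑ k, t k with hM
  have htM : ∀ k, t k ≤ M := fun k =>
    Finset.single_le_sum (fun i _ => ht i) (Finset.mem_univ k)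
  set f : Fin n → Fin n → ℝ → ℝ := fun k l =>
    Set.indicator (Set.Iio (min (t k) (t l))) (fun _ => θ k * S k l * θ l) with hf
  have hint : ∀ k l, Integrable (f k l) (volume.restrict (Set.Ioc (0:ℝ) M)) := by
    intro k l
    have hc : Integrable (fun _ : ℝ => θ k * S k l * θ l)
        (volume.restrict (Set.Ioc (0:ℝ) M)) :=
      integrableOn_const measure_Ioc_lt_top.ne
    exact hc.indicator measurableSet_Iio
  have hterm : ∀ k l, θ k * (S k l * min (t k) (t l)) * θ l
      = ∫ u in Set.Ioc (0:ℝ) M, f k l u := by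
    intro k l
    have hm0 : 0 ≤ min (t k) (t l) := le_min (ht k) (ht l)
    have hmM : min (t k) (t l) ≤ M := le_trans (min_le_left _ _) (htM k)
    rw [hf]
    rw [MeasureTheory.integral_indicator_const _ measurableSet_Iio]
    rw [measureReal_def, Measure.restrict_apply measurableSet_Iio]
    have hset : Set.Iio (min (t k) (t l)) ∩ Set.Ioc (0:ℝ) M
        = Set.Ioo 0 (min (t k) (t l)) := by
      ext u
      simp only [Set.mem_inter_iff, Set.mem_Iio, Set.mem_Ioc, Set.mem_Ioo]
      constructor
      · rintro ⟨h1, h2, h3⟩; exact ⟨h2, h1⟩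
      · rintro ⟨h1, h2⟩; exact ⟨h2, h1, le_trans (le_of_lt h2) hmM⟩
    rw [hset, Real.volume_Ioo, ENNReal.toReal_ofReal (by linarith), smul_eq_mul]
    ring
  have key : quad (diaM t S) θ = ∫ u in Set.Ioc (0:ℝ) M, ∑ k, ∑ l, f k l u := by
    rw [quad]
    rw [MeasureTheory.integral_finset_sum _
      (fun k _ => integrable_finset_sum _ (fun l _ => hint k l))]
    refine Finset.sum_congr rfl fun k _ => ?_
    rw [MeasureTheory.integral_finset_sum _ (fun l _ => hint k l)]
    exact Finset.sum_congr rfl fun l _ => by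
      simpa [diaM, mul_assoc] using hterm k l
  rw [key]
  refine integral_nonneg fun u => ?_
  have : (∑ k, ∑ l, f k l u)
      = ∑ k, ∑ l, (if u < t k then θ k else 0) * S k l * (if u < t l then θ l else 0) := by
    refine Finset.sum_congr rfl fun k _ => Finset.sum_congr rfl fun l _ => ?_
    by_cases hk : u < t k <;> by_cases hl : u < t l <;>
      simp [hf, Set.indicator_apply, lt_min_iff, hk, hl]
  rw [this]
  exact aux_quad_psd S hS _

lemma aux_re_z (x q : ℝ) : (Complex.I * (x:ℂ) - (q:ℂ)/2).re = -q/2 ∧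
    (Complex.I * (x:ℂ) - (q:ℂ)/2).im = x := by
  constructor <;> simp [Complex.div_re, Complex.div_im] <;> ring

lemma aux_re_g (x q : ℝ) : (Complex.exp (Complex.I * (x:ℂ) - (q:ℂ)/2) - 1).re
    = Real.exp (-q/2) * Real.cos x - 1 := by
  rw [Complex.sub_re, Complex.one_re, Complex.exp_re, (aux_re_z x q).1, (aux_re_z x q).2]

lemma aux_normg_le2 (x q : ℝ) (hq : 0 ≤ q) :
    ‖Complex.exp (Complex.I * (x:ℂ) - (q:ℂ)/2) - 1‖ ≤ 2 := by
  have h1 : ‖Complex.exp (Complex.I * (x:ℂ) - (q:ℂ)/2)‖ ≤ 1 := by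
    rw [Complex.norm_exp, (aux_re_z x q).1]
    exact Real.exp_le_one_iff.2 (by linarith)
  calc ‖Complex.exp (Complex.I * (x:ℂ) - (q:ℂ)/2) - 1‖
      ≤ ‖Complex.exp (Complex.I * (x:ℂ) - (q:ℂ)/2)‖ + ‖(1:ℂ)‖ := by
        simpa using
          norm_sub_le (Complex.exp (Complex.I * (x:ℂ) - (q:ℂ)/2)) 1
    _ ≤ 2 := by simpa using by linarith [h1]

lemma aux_real_exp_sub_one (q : ℝ) (hq : 0 ≤ q) : |Real.exp (-q/2) - 1| ≤ q/2 := by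
  have h1 : Real.exp (-q/2) ≤ 1 := Real.exp_le_one_iff.2 (by linarith)
  have h2 := Real.add_one_le_exp (-q/2)
  rw [abs_of_nonpos (by linarith)]
  linarith

lemma aux_normg_le (x q : ℝ) (hq : 0 ≤ q) :
    ‖Complex.exp (Complex.I * (x:ℂ) - (q:ℂ)/2) - 1‖ ≤ 2 * |x| + q/2 := by
  have hsplit : Complex.exp (Complex.I * (x:ℂ) - (q:ℂ)/2) - 1
      = Complex.exp (-(q:ℂ)/2) * (Complex.exp (Complex.I * (x:ℂ)) - 1)
        + (Complex.exp (-(q:ℂ)/2) - 1) := by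
    have h1 : Complex.exp (Complex.I * (x:ℂ) - (q:ℂ)/2)
        = Complex.exp (-(q:ℂ)/2) * Complex.exp (Complex.I * (x:ℂ)) := by
      rw [← Complex.exp_add]; ring_nf
    rw [h1]; ring
  have hcast : (-(q:ℂ)/2) = ((-q/2 : ℝ) : ℂ) := by push_cast; ring
  have he : ‖Complex.exp (-(q:ℂ)/2)‖ ≤ 1 := by
    rw [hcast, ← Complex.ofReal_exp, Complex.norm_real, Real.norm_eq_abs,
      _root_.abs_of_nonneg (Real.exp_pos _).le]
    exact Real.exp_le_one_iff.2 (by linarith)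
  have hE : ‖Complex.exp (Complex.I * (x:ℂ)) - 1‖ ≤ 2 * |x| := by
    rcases le_or_gt |x| 1 with h | h
    · have habs : ‖Complex.I * (x:ℂ)‖ = |x| := by
        simp
      have := Complex.norm_exp_sub_one_le (x := Complex.I * (x:ℂ)) (by rw [habs]; exact h)
      rwa [habs] at this
    · have h1 : ‖Complex.exp (Complex.I * (x:ℂ))‖ = 1 := by
        rw [Complex.norm_exp]
        have : (Complex.I * (x:ℂ)).re = 0 := by simp
        rw [this, Real.exp_zero]
      calc ‖Complex.exp (Complex.I * (x:ℂ)) - 1‖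
          ≤ ‖Complex.exp (Complex.I * (x:ℂ))‖ + ‖(1:ℂ)‖ := by
            simpa using norm_sub_le (Complex.exp (Complex.I * (x:ℂ))) 1
        _ ≤ 2 * |x| := by rw [h1]; simpa using by linarith
  have hr : ‖Complex.exp (-(q:ℂ)/2) - 1‖ ≤ q/2 := by
    rw [hcast, ← Complex.ofReal_exp, ← Complex.ofReal_one, ← Complex.ofReal_sub,
      Complex.norm_real, Real.norm_eq_abs]
    exact aux_real_exp_sub_one q hq
  calc ‖Complex.exp (Complex.I * (x:ℂ) - (q:ℂ)/2) - 1‖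
      = ‖Complex.exp (-(q:ℂ)/2) * (Complex.exp (Complex.I * (x:ℂ)) - 1)
        + (Complex.exp (-(q:ℂ)/2) - 1)‖ := by rw [← hsplit]
    _ ≤ ‖Complex.exp (-(q:ℂ)/2)‖ * ‖Complex.exp (Complex.I * (x:ℂ)) - 1‖
        + ‖Complex.exp (-(q:ℂ)/2) - 1‖ := by
          rw [← norm_mul]
          exact norm_add_le _ _
    _ ≤ 1 * (2 * |x|) + q/2 := by gcongr
    _ = 2 * |x| + q/2 := by ring

lemma aux_le_mul_min {v a c1 c2 : ℝ} (ha : 0 ≤ a) (hc1 : 0 ≤ c1) (hc2 : 0 ≤ c2)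
    (h1 : v ≤ c1 * a) (h2 : v ≤ c2) : v ≤ (c1 + c2) * min a 1 := by
  rcases le_or_gt a 1 with h | h
  · rw [min_eq_left h]
    nlinarith
  · rw [min_eq_right h.le]
    nlinarith

/-- `nrm` is the Euclidean norm on `ℝ^n`. -/
def nrm {n : ℕ} (t : Fin n → ℝ) : ℝ := Real.sqrt (∑ k, (t k) ^ 2)

lemma aux_nrm_nonneg {n : ℕ} (t : Fin n → ℝ) : 0 ≤ nrm t := Real.sqrt_nonneg _

lemma aux_abs_apply_le_nrm {n : ℕ} (t : Fin n → ℝ) (k : Fin n) : |t k| ≤ nrm t := by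
  rw [nrm, ← Real.sqrt_sq_eq_abs]
  exact Real.sqrt_le_sqrt (Finset.single_le_sum (f := fun j => t j ^ 2)
    (fun i _ => sq_nonneg _) (Finset.mem_univ k))

lemma aux_dot_bound {n : ℕ} (θ μ t : Fin n → ℝ) :
    |dot θ (diaV t μ)| ≤ (∑ k, |θ k * μ k|) * nrm t := by
  rw [dot]
  calc |∑ k, θ k * diaV t μ k| ≤ ∑ k, |θ k * diaV t μ k| :=
        Finset.abs_sum_le_sum_abs _ _
    _ ≤ ∑ k, |θ k * μ k| * nrm t := by
        refine Finset.sum_le_sum fun k _ => ?_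
        have : |θ k * diaV t μ k| = |θ k * μ k| * |t k| := by
          rw [show θ k * diaV t μ k = (θ k * μ k) * t k by rw [diaV]; ring, abs_mul]
        rw [this]
        exact mul_le_mul_of_nonneg_left (aux_abs_apply_le_nrm t k) (abs_nonneg _)
    _ = (∑ k, |θ k * μ k|) * nrm t := by rw [Finset.sum_mul]

lemma aux_quad_bound {n : ℕ} (θ t : Fin n → ℝ) (S : Matrix (Fin n) (Fin n) ℝ)
    (ht : ∀ k, 0 ≤ t k) :
    |quad (diaM t S) θ| ≤ (∑ k, ∑ l, |θ k * S k l * θ l|) * nrm t := by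
  rw [quad]
  calc |∑ k, ∑ l, θ k * diaM t S k l * θ l|
      ≤ ∑ k, |∑ l, θ k * diaM t S k l * θ l| := Finset.abs_sum_le_sum_abs _ _
    _ ≤ ∑ k, ∑ l, |θ k * diaM t S k l * θ l| :=
        Finset.sum_le_sum fun k _ => Finset.abs_sum_le_sum_abs _ _
    _ ≤ ∑ k, ∑ l, |θ k * S k l * θ l| * nrm t := by
        refine Finset.sum_le_sum fun k _ => Finset.sum_le_sum fun l _ => ?_
        have hmin : |min (t k) (t l)| ≤ nrm t := by
          rw [_root_.abs_of_nonneg (le_min (ht k) (ht l))]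
          exact le_trans (min_le_left _ _) (le_trans (le_abs_self _) (aux_abs_apply_le_nrm t k))
        have : |θ k * diaM t S k l * θ l| = |θ k * S k l * θ l| * |min (t k) (t l)| := by
          rw [show θ k * diaM t S k l * θ l = (θ k * S k l * θ l) * min (t k) (t l) by
            rw [diaM]; simp only [Matrix.of_apply]; ring, abs_mul]
        rw [this]
        exact mul_le_mul_of_nonneg_left hmin (abs_nonneg _)
    _ = (∑ k, ∑ l, |θ k * S k l * θ l|) * nrm t := by
        rw [Finset.sum_mul]
        exact Finset.sum_congr rfl fun k _ => (Finset.sum_mul _ _ _).symm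

/-- The constant in the integrand bound. -/
def Kc {n : ℕ} (μ : Fin n → ℝ) (S : Matrix (Fin n) (Fin n) ℝ) (θ : Fin n → ℝ) : ℝ :=
  (2 * (∑ k, |θ k * μ k|) + (∑ k, ∑ l, |θ k * S k l * θ l|) / 2) + 2

lemma aux_Kc_nonneg {n : ℕ} (μ : Fin n → ℝ) (S : Matrix (Fin n) (Fin n) ℝ)
    (θ : Fin n → ℝ) : 0 ≤ Kc μ S θ := by
  have h1 : 0 ≤ ∑ k, |θ k * μ k| := Finset.sum_nonneg fun k _ => abs_nonneg _
  have h2 : 0 ≤ ∑ k, ∑ l, |θ k * S k l * θ l| :=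
    Finset.sum_nonneg fun k _ => Finset.sum_nonneg fun l _ => abs_nonneg _
  rw [Kc]; linarith

/-- Bound on the complex integrand. -/
lemma aux_g_bound {n : ℕ} (μ : Fin n → ℝ) (S : Matrix (Fin n) (Fin n) ℝ)
    (hS : S.PosSemidef) (θ t : Fin n → ℝ) (ht : ∀ k, 0 ≤ t k) :
    ‖Complex.exp (Complex.I * (dot θ (diaV t μ) : ℂ) -
      (quad (diaM t S) θ : ℂ) / 2) - 1‖ ≤ Kc μ S θ * min (nrm t) 1 := by
  set x := dot θ (diaV t μ)
  set q := quad (diaM t S) θ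
  have hq : 0 ≤ q := aux_quad_diaM_nonneg S hS t θ ht
  have h1 : 0 ≤ ∑ k, |θ k * μ k| := Finset.sum_nonneg fun k _ => abs_nonneg _
  have h2 : 0 ≤ ∑ k, ∑ l, |θ k * S k l * θ l| :=
    Finset.sum_nonneg fun k _ => Finset.sum_nonneg fun l _ => abs_nonneg _
  rw [Kc]
  refine aux_le_mul_min (aux_nrm_nonneg t) (by linarith) (by norm_num) ?_ ?_
  · calc ‖Complex.exp (Complex.I * (x:ℂ) - (q:ℂ)/2) - 1‖
        ≤ 2 * |x| + q / 2 := aux_normg_le x q hq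
      _ ≤ 2 * ((∑ k, |θ k * μ k|) * nrm t) + ((∑ k, ∑ l, |θ k * S k l * θ l|) * nrm t) / 2 := by
          have hx := aux_dot_bound θ μ t
          have hqb := aux_quad_bound θ t S ht
          have : q ≤ (∑ k, ∑ l, |θ k * S k l * θ l|) * nrm t := le_trans (le_abs_self q) hqb
          linarith
      _ = (2 * (∑ k, |θ k * μ k|) + (∑ k, ∑ l, |θ k * S k l * θ l|) / 2) * nrm t := by ring
  · exact aux_normg_le2 x q hq

/-- Bound on the real integrand. -/
lemma aux_h_bound {n : ℕ} (μ : Fin n → ℝ) (S : Matrix (Fin n) (Fin n) ℝ)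
    (hS : S.PosSemidef) (θ t : Fin n → ℝ) (ht : ∀ k, 0 ≤ t k) :
    |Real.exp (-(quad (diaM t S) θ) / 2) - 1| ≤ Kc μ S θ * min (nrm t) 1 := by
  set q := quad (diaM t S) θ
  have hq : 0 ≤ q := aux_quad_diaM_nonneg S hS t θ ht
  have h1 : 0 ≤ ∑ k, |θ k * μ k| := Finset.sum_nonneg fun k _ => abs_nonneg _
  have h2 : 0 ≤ ∑ k, ∑ l, |θ k * S k l * θ l| :=
    Finset.sum_nonneg fun k _ => Finset.sum_nonneg fun l _ => abs_nonneg _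
  rw [Kc]
  refine aux_le_mul_min (aux_nrm_nonneg t) (by linarith) (by norm_num) ?_ ?_
  · calc |Real.exp (-q / 2) - 1| ≤ q / 2 := aux_real_exp_sub_one q hq
      _ ≤ ((∑ k, ∑ l, |θ k * S k l * θ l|) * nrm t) / 2 := by
          have hqb := aux_quad_bound θ t S ht
          have : q ≤ (∑ k, ∑ l, |θ k * S k l * θ l|) * nrm t := le_trans (le_abs_self q) hqb
          linarith
      _ ≤ (2 * (∑ k, |θ k * μ k|) + (∑ k, ∑ l, |θ k * S k l * θ l|) / 2) * nrm t := by
          have := aux_nrm_nonneg t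
          nlinarith
  · have hle : Real.exp (-q/2) ≤ 1 := Real.exp_le_one_iff.2 (by linarith)
    rw [abs_of_nonpos (by linarith)]
    have := (Real.exp_pos (-q/2)).le
    linarith

lemma aux_cont_nrm {n : ℕ} : Continuous (nrm (n := n)) := by
  unfold nrm
  exact Real.continuous_sqrt.comp (continuous_finset_sum _ fun k _ => (continuous_apply k).pow 2)

lemma aux_cont_dot_t {n : ℕ} (θ μ : Fin n → ℝ) :
    Continuous fun t : Fin n → ℝ => dot θ (diaV t μ) := by
  unfold dot diaV
  exact continuous_finset_sum _ fun k _ =>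
    continuous_const.mul ((continuous_apply k).mul continuous_const)

lemma aux_cont_quad_t {n : ℕ} (θ : Fin n → ℝ) (S : Matrix (Fin n) (Fin n) ℝ) :
    Continuous fun t : Fin n → ℝ => quad (diaM t S) θ := by
  unfold quad diaM
  refine continuous_finset_sum _ fun k _ => continuous_finset_sum _ fun l _ => ?_
  simp only [Matrix.of_apply]
  exact (continuous_const.mul (continuous_const.mul
    ((continuous_apply k).min (continuous_apply l)))).mul continuous_const

lemma aux_cont_dot_θ {n : ℕ} (μ t : Fin n → ℝ) :
    Continuous fun θ : Fin n → ℝ => dot θ (diaV t μ) := by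
  unfold dot diaV
  exact continuous_finset_sum _ fun k _ => (continuous_apply k).mul continuous_const

lemma aux_cont_quad_θ {n : ℕ} (t : Fin n → ℝ) (S : Matrix (Fin n) (Fin n) ℝ) :
    Continuous fun θ : Fin n → ℝ => quad (diaM t S) θ := by
  unfold quad diaM
  refine continuous_finset_sum _ fun k _ => continuous_finset_sum _ fun l _ => ?_
  exact ((continuous_apply k).mul continuous_const).mul (continuous_apply l)

lemma aux_cont_g_t {n : ℕ} (μ : Fin n → ℝ) (S : Matrix (Fin n) (Fin n) ℝ)
    (θ : Fin n → ℝ) :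
    Continuous fun t : Fin n → ℝ => Complex.exp (Complex.I * (dot θ (diaV t μ) : ℂ) -
      (quad (diaM t S) θ : ℂ) / 2) - 1 := by
  refine Continuous.sub ?_ continuous_const
  refine Complex.continuous_exp.comp ?_
  exact (continuous_const.mul (Complex.continuous_ofReal.comp (aux_cont_dot_t θ μ))).sub
    ((Complex.continuous_ofReal.comp (aux_cont_quad_t θ S)).div_const 2)

lemma aux_cont_g_θ {n : ℕ} (μ : Fin n → ℝ) (S : Matrix (Fin n) (Fin n) ℝ)
    (t : Fin n → ℝ) :
    Continuous fun θ : Fin n → ℝ => Complex.exp (Complex.I * (dot θ (diaV t μ) : ℂ) -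
      (quad (diaM t S) θ : ℂ) / 2) - 1 := by
  refine Continuous.sub ?_ continuous_const
  refine Complex.continuous_exp.comp ?_
  exact (continuous_const.mul (Complex.continuous_ofReal.comp (aux_cont_dot_θ μ t))).sub
    ((Complex.continuous_ofReal.comp (aux_cont_quad_θ t S)).div_const 2)

lemma aux_minf_integrable {n : ℕ} (ρ : Measure (Fin n → ℝ))
    (hmom : ∫⁻ t, ENNReal.ofReal (min (Real.sqrt (∑ k, (t k) ^ 2)) 1) ∂ρ < ⊤) :
    Integrable (fun t => min (nrm t) 1) ρ := by
  constructor
  · exact (aux_cont_nrm.min continuous_const).aestronglyMeasurable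
  · rw [hasFiniteIntegral_iff_ofReal (Filter.Eventually.of_forall fun t =>
      le_min (aux_nrm_nonneg t) zero_le_one)]
    exact hmom

/-- Monotone bound on the constant. -/
lemma aux_Kc_le {n : ℕ} (μ : Fin n → ℝ) (S : Matrix (Fin n) (Fin n) ℝ)
    (θ : Fin n → ℝ) (r : ℝ) (hθ : ‖θ‖ ≤ r) :
    Kc μ S θ ≤ (2 * (r * ∑ k, |μ k|) + (r ^ 2 * ∑ k, ∑ l, |S k l|) / 2) + 2 := by
  have hr : 0 ≤ r := le_trans (norm_nonneg θ) hθ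
  have hk : ∀ k, |θ k| ≤ r := fun k => le_trans (norm_le_pi_norm θ k) hθ
  have h1 : (∑ k, |θ k * μ k|) ≤ r * ∑ k, |μ k| := by
    rw [Finset.mul_sum]
    refine Finset.sum_le_sum fun k _ => ?_
    rw [abs_mul]
    exact mul_le_mul_of_nonneg_right (hk k) (abs_nonneg _)
  have h2 : (∑ k, ∑ l, |θ k * S k l * θ l|) ≤ r ^ 2 * ∑ k, ∑ l, |S k l| := by
    rw [Finset.mul_sum]
    refine Finset.sum_le_sum fun k _ => ?_
    rw [Finset.mul_sum]
    refine Finset.sum_le_sum fun l _ => ?_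
    rw [abs_mul, abs_mul]
    calc |θ k| * |S k l| * |θ l| ≤ r * |S k l| * r := by
          refine mul_le_mul ?_ (hk l) (abs_nonneg _) (by positivity)
          exact mul_le_mul_of_nonneg_right (hk k) (abs_nonneg _)
      _ = r ^ 2 * |S k l| := by ring
  rw [Kc]
  linarith

end Aux

/-- If the characteristic function of `X*(s) = (B* ⊙ T)(s)` is in `L^p`, then so is the
characteristic function of `Y(s) = s m + (B ⊙ T)(s)`. -/
theorem stmt1 {n : ℕ} (hn : 1 ≤ n) (μ m : Fin n → ℝ)
    (S : Matrix (Fin n) (Fin n) ℝ) (hS : S.PosSemidef)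
    (ρ : Measure (Fin n → ℝ))
    (hsupp : ρ {t | ¬ ((∀ k, 0 ≤ t k) ∧ t ≠ 0)} = 0)
    (hmom : ∫⁻ t, ENNReal.ofReal (min (Real.sqrt (∑ k, (t k) ^ 2)) 1) ∂ρ < ⊤)
    (s : ℝ) (hs : 0 ≤ s) (p : ℝ) (hp : 0 < p)
    (hLp : Integrable (fun θ : Fin n → ℝ => Real.exp (s * Ψstar S ρ θ) ^ p)) :
    Integrable (fun θ : Fin n → ℝ =>
      ‖Complex.exp (Complex.I * ((s * dot θ m : ℝ) : ℂ) +
        (s : ℂ) * Ψws μ S ρ θ)‖ ^ p) := by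
  have hae : ∀ᵐ t ∂ρ, (∀ k, 0 ≤ t k) ∧ t ≠ 0 := ae_iff.mpr hsupp
  have hminf := aux_minf_integrable ρ hmom
  -- integrability of the complex integrand
  have hg : ∀ θ : Fin n → ℝ, Integrable (fun t => Complex.exp
      (Complex.I * (dot θ (diaV t μ) : ℂ) - (quad (diaM t S) θ : ℂ) / 2) - 1) ρ := by
    intro θ
    refine Integrable.mono' (hminf.const_mul (Kc μ S θ))
      (aux_cont_g_t μ S θ).aestronglyMeasurable ?_
    filter_upwards [hae] with t htP
    
    exact aux_g_bound μ S hS θ t htP.1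
  -- integrability of the real integrand
  have hh : ∀ θ : Fin n → ℝ, Integrable (fun t =>
      Real.exp (-(quad (diaM t S) θ) / 2) - 1) ρ := by
    intro θ
    have hc : Continuous fun t : Fin n → ℝ => Real.exp (-(quad (diaM t S) θ) / 2) - 1 :=
      ((Real.continuous_exp.comp ((aux_cont_quad_t θ S).neg.div_const 2)).sub continuous_const)
    refine Integrable.mono' (hminf.const_mul (Kc μ S θ)) hc.aestronglyMeasurable ?_
    filter_upwards [hae] with t htP
    rw [Real.norm_eq_abs]
    exact aux_h_bound μ S hS θ t htP.1
  -- real part comparison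
  have hre_le : ∀ θ : Fin n → ℝ, (Ψws μ S ρ θ).re ≤ Ψstar S ρ θ := by
    intro θ
    have h1 : (Ψws μ S ρ θ).re = ∫ t, (Complex.exp
        (Complex.I * (dot θ (diaV t μ) : ℂ) - (quad (diaM t S) θ : ℂ) / 2) - 1).re ∂ρ := by
      rw [Ψws]
      have h2 := integral_re (hg θ)
      simp only [RCLike.re_to_complex] at h2
      rw [← h2]
    rw [h1, Ψstar]
    refine integral_mono_ae (hg θ).re (hh θ) ?_
    filter_upwards [hae] with t htP
    have hq : 0 ≤ quad (diaM t S) θ := aux_quad_diaM_nonneg S hS t θ htP.1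
    rw [aux_re_g]
    have hc := Real.cos_le_one (dot θ (diaV t μ))
    have he := (Real.exp_pos (-(quad (diaM t S) θ)/2)).le
    have : Real.exp (-(quad (diaM t S) θ)/2) * Real.cos (dot θ (diaV t μ))
        ≤ Real.exp (-(quad (diaM t S) θ)/2) := by nlinarith
    linarith
  -- continuity of Ψws
  have hΨcont : Continuous (Ψws μ S ρ) := by
    rw [continuous_iff_continuousAt]
    intro θ₀
    have hball : Metric.closedBall θ₀ 1 ∈ nhds θ₀ := Metric.closedBall_mem_nhds θ₀ one_pos
    set KK : ℝ := (2 * ((‖θ₀‖ + 1) * ∑ k, |μ k|) +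
      ((‖θ₀‖ + 1) ^ 2 * ∑ k, ∑ l, |S k l|) / 2) + 2 with hKK
    refine MeasureTheory.continuousAt_of_dominated
      (Filter.Eventually.of_forall fun θ => (aux_cont_g_t μ S θ).aestronglyMeasurable)
      ?_ (hminf.const_mul KK)
      (Filter.Eventually.of_forall fun t => ((aux_cont_g_θ μ S t).continuousAt))
    refine Filter.eventually_of_mem hball fun θ hθ => ?_
    filter_upwards [hae] with t htP
    have hθn : ‖θ‖ ≤ ‖θ₀‖ + 1 := by
      have h1 : ‖θ‖ - ‖θ₀‖ ≤ ‖θ - θ₀‖ := norm_sub_norm_le θ θ₀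
      have h2 : ‖θ - θ₀‖ ≤ 1 := by
        rw [← dist_eq_norm]
        exact Metric.mem_closedBall.1 hθ
      linarith
    have hmin0 : 0 ≤ min (nrm t) 1 := le_min (aux_nrm_nonneg t) zero_le_one
    calc ‖Complex.exp (Complex.I * (dot θ (diaV t μ) : ℂ) -
          (quad (diaM t S) θ : ℂ) / 2) - 1‖
        ≤ Kc μ S θ * min (nrm t) 1 := by
          exact aux_g_bound μ S hS θ t htP.1
      _ ≤ KK * min (nrm t) 1 :=
          mul_le_mul_of_nonneg_right (aux_Kc_le μ S θ (‖θ₀‖ + 1) hθn) hmin0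
  -- the target function, rewritten
  have habs : ∀ θ : Fin n → ℝ, ‖Complex.exp (Complex.I * ((s * dot θ m : ℝ) : ℂ) +
      (s : ℂ) * Ψws μ S ρ θ)‖ = Real.exp (s * (Ψws μ S ρ θ).re) := by
    intro θ
    rw [Complex.norm_exp]
    congr 1
    simp [Complex.add_re, Complex.mul_re]
  refine hLp.mono' ?_ ?_
  · have heq : (fun θ : Fin n → ℝ => ‖Complex.exp
        (Complex.I * ((s * dot θ m : ℝ) : ℂ) + (s : ℂ) * Ψws μ S ρ θ)‖ ^ p)
        = fun θ => Real.exp (s * (Ψws μ S ρ θ).re * p) := by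
      funext θ
      rw [habs θ, Real.rpow_def_of_pos (Real.exp_pos _), Real.log_exp]
    rw [heq]
    exact (Real.continuous_exp.comp (((continuous_const.mul
      (Complex.continuous_re.comp hΨcont))).mul continuous_const)).aestronglyMeasurable
  · refine Filter.Eventually.of_forall fun θ => ?_
    rw [Real.norm_eq_abs, _root_.abs_of_nonneg (Real.rpow_nonneg (norm_nonneg _) _)]
    refine Real.rpow_le_rpow (norm_nonneg _) ?_ hp.le
    rw [habs θ]
    exact Real.exp_le_exp.2 (mul_le_mul_of_nonneg_left (hre_le θ) hs)
end
end

section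
/- Let n ≥ 1, b > 0, μ ∈ ℝ^n, and let Σ ∈ ℝ^{n×n} be a symmetric positive definite matrix. Define Φ(θ) = exp(−b Log(1 − i⟨μ,θ⟩/b + ‖θ‖²_Σ/(2b))) for θ ∈ ℝ^n, where Log is the principal branch of the complex logarithm. Let p > 0. If p b > n/2, then Φ ∈ L^p(ℝ^n), i.e. θ ↦ |Φ(θ)|^p is Lebesgue integrable on ℝ^n. -/
open MeasureTheory Complex

noncomputable section

lemma quad_continuous {n : ℕ} (A : Matrix (Fin n) (Fin n) ℝ) : Continuous (quad A) := by
  unfold quad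
  exact continuous_finset_sum _ fun k _ => continuous_finset_sum _ fun l _ =>
    ((continuous_apply k).mul continuous_const).mul (continuous_apply l)

lemma dot_continuous {n : ℕ} (x : Fin n → ℝ) : Continuous (dot x) := by
  unfold dot
  exact continuous_finset_sum _ fun k _ => continuous_const.mul (continuous_apply k)

lemma quad_eq_dotProduct {n : ℕ} (A : Matrix (Fin n) (Fin n) ℝ) (θ : Fin n → ℝ) :
    quad A θ = dotProduct θ (A.mulVec θ) := by
  simp only [quad, dotProduct, Matrix.mulVec, Finset.mul_sum]
  exact Finset.sum_congr rfl fun k _ => Finset.sum_congr rfl fun l _ => by ring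

lemma quad_pos {n : ℕ} {A : Matrix (Fin n) (Fin n) ℝ} (hA : A.PosDef)
    {θ : Fin n → ℝ} (hθ : θ ≠ 0) : 0 < quad A θ := by
  rw [quad_eq_dotProduct]
  simpa using (Matrix.posDef_iff_dotProduct_mulVec.mp hA).2 hθ

lemma quad_smul {n : ℕ} (A : Matrix (Fin n) (Fin n) ℝ) (a : ℝ) (θ : Fin n → ℝ) :
    quad A (a • θ) = a ^ 2 * quad A θ := by
  simp only [quad, Pi.smul_apply, smul_eq_mul, Finset.mul_sum]
  exact Finset.sum_congr rfl fun k _ => Finset.sum_congr rfl fun l _ => by ring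

lemma quad_lower {n : ℕ} (hn : 1 ≤ n) {S : Matrix (Fin n) (Fin n) ℝ} (hS : S.PosDef) :
    ∃ c > 0, ∀ θ : Fin n → ℝ, c * ‖θ‖ ^ 2 ≤ quad S θ := by
  haveI : Nontrivial (Fin n → ℝ) :=
    ⟨fun _ => 0, fun _ => 1, fun h => by simpa using congrFun h ⟨0, hn⟩⟩
  obtain ⟨θ₀, hθ₀, hmin⟩ := (isCompact_sphere (0 : Fin n → ℝ) 1).exists_isMinOn
    (NormedSpace.sphere_nonempty.mpr zero_le_one) (quad_continuous S).continuousOn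
  have hθ₀n : ‖θ₀‖ = 1 := by simpa using mem_sphere_zero_iff_norm.mp hθ₀
  have hθ₀0 : θ₀ ≠ 0 := fun h => by simp [h] at hθ₀n
  refine ⟨quad S θ₀, quad_pos hS hθ₀0, fun θ => ?_⟩
  by_cases hθ : θ = 0
  · simp [hθ, quad]
  · have ha : (0:ℝ) < ‖θ‖ := norm_pos_iff.mpr hθ
    have hu : (‖θ‖⁻¹ • θ) ∈ Metric.sphere (0 : Fin n → ℝ) 1 := by
      rw [mem_sphere_zero_iff_norm, norm_smul, norm_inv, norm_norm]
      field_simp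
    have h1 : quad S θ₀ ≤ quad S (‖θ‖⁻¹ • θ) := hmin hu
    have h2 : quad S θ = ‖θ‖ ^ 2 * quad S (‖θ‖⁻¹ • θ) := by
      rw [← quad_smul, smul_smul]
      field_simp
      simp
    rw [h2]
    nlinarith [sq_nonneg ‖θ‖]

/-- If `p b > n/2`, the characteristic function of the variance-gamma distribution
`VG^n(b, μ, Σ)` is in `L^p(ℝ^n)`. -/
theorem stmt2 {n : ℕ} (hn : 1 ≤ n) (b : ℝ) (hb : 0 < b) (μ : Fin n → ℝ)
    (S : Matrix (Fin n) (Fin n) ℝ) (hS : S.PosDef) (p : ℝ) (hp : 0 < p)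
    (hpb : p * b > n / 2) :
    Integrable (fun θ : Fin n → ℝ =>
      ‖Complex.exp (-(b : ℂ) * Complex.log (1 -
        Complex.I * (dot μ θ : ℂ) / (b : ℂ) + (quad S θ : ℂ) / (2 * (b : ℂ))))‖ ^ p) := by
  obtain ⟨c, hc, hcq⟩ := quad_lower hn hS
  -- the complex number inside the log
  set z : (Fin n → ℝ) → ℂ := fun θ => 1 -
    Complex.I * (dot μ θ : ℂ) / (b : ℂ) + (quad S θ : ℂ) / (2 * (b : ℂ)) with hz
  have hquad_nonneg : ∀ θ, 0 ≤ quad S θ := fun θ =>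
    le_trans (by positivity) (hcq θ)
  have hre : ∀ θ, (z θ).re = 1 + quad S θ / (2 * b) := by
    intro θ
    have : z θ = (((1 + quad S θ / (2 * b)) : ℝ) : ℂ) + (((-(dot μ θ / b)) : ℝ) : ℂ) * Complex.I := by
      rw [hz]
      push_cast
      field_simp
      ring
    rw [this]
    simp only [Complex.add_re, Complex.ofReal_re, Complex.mul_re, Complex.I_re,
      Complex.I_im, Complex.ofReal_im]
    ring
  have hre_ge : ∀ θ, 1 ≤ (z θ).re := by
    intro θ
    rw [hre θ]
    have := hquad_nonneg θ
    have h2b : 0 < 2 * b := by linarith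
    nlinarith [div_nonneg this h2b.le]
  have habs_ge : ∀ θ, 1 + quad S θ / (2 * b) ≤ ‖z θ‖ := fun θ => by
    rw [← hre θ]; exact Complex.re_le_norm _
  have habs_pos : ∀ θ, 0 < ‖z θ‖ := fun θ =>
    lt_of_lt_of_le (by nlinarith [div_nonneg (hquad_nonneg θ) (by linarith : (0:ℝ) ≤ 2 * b)])
      (habs_ge θ)
  -- rewrite the integrand
  have hF : ∀ θ, ‖Complex.exp (-(b : ℂ) * Complex.log (z θ))‖ ^ p
      = ‖z θ‖ ^ (-(b * p)) := by
    intro θ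
    rw [Complex.norm_exp]
    have h1 : (-(b : ℂ) * Complex.log (z θ)).re = -b * Real.log (‖z θ‖) := by
      simp [Complex.mul_re, Complex.log_re]
    rw [h1]
    have h2 : ‖z θ‖ ^ (-b : ℝ) = Real.exp (-b * Real.log (‖z θ‖)) := by
      rw [Real.rpow_def_of_pos (habs_pos θ), mul_comm]
    rw [← h2, ← Real.rpow_mul (norm_nonneg _)]
    ring_nf
  -- continuity
  have hzc : Continuous z := by
    apply Continuous.add
    · apply Continuous.sub continuous_const
      exact (continuous_const.mul (Complex.continuous_ofReal.comp (dot_continuous μ))).div_const _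
    · exact (Complex.continuous_ofReal.comp (quad_continuous S)).div_const _
  have hlogc : Continuous fun θ => Complex.log (z θ) := by
    rw [continuous_iff_continuousAt]
    intro θ
    exact (continuousAt_clog (Or.inl (by linarith [hre_ge θ]))).comp hzc.continuousAt
  have hFc : Continuous fun θ : Fin n → ℝ =>
      ‖Complex.exp (-(b : ℂ) * Complex.log (z θ))‖ ^ p := by
    apply Continuous.rpow_const
    · exact continuous_norm.comp (Complex.continuous_exp.comp (continuous_const.mul hlogc))
    · exact fun _ => Or.inr hp.le
  -- the dominating function
  set m : ℝ := min 1 (c / (2 * b)) with hm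
  have hm0 : 0 < m := lt_min one_pos (by positivity)
  have hbound : ∀ θ : Fin n → ℝ, m * (1 + ‖θ‖ ^ 2) ≤ ‖z θ‖ := by
    intro θ
    refine le_trans ?_ (habs_ge θ)
    have h1 : m * 1 ≤ 1 := by rw [mul_one, hm]; exact min_le_left _ _
    have h2 : m * ‖θ‖ ^ 2 ≤ quad S θ / (2 * b) := by
      have h3 : m ≤ c / (2 * b) := min_le_right _ _
      have h4 : c * ‖θ‖ ^ 2 ≤ quad S θ := hcq θ
      have h5 : c / (2 * b) * ‖θ‖ ^ 2 ≤ quad S θ / (2 * b) := by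
        rw [div_mul_eq_mul_div, div_le_div_iff_of_pos_right (by linarith)]
        exact h4
      exact le_trans (mul_le_mul_of_nonneg_right h3 (sq_nonneg _)) h5
    calc m * (1 + ‖θ‖ ^ 2) = m * 1 + m * ‖θ‖ ^ 2 := by ring
    _ ≤ 1 + quad S θ / (2 * b) := add_le_add h1 h2
  have hint : Integrable (fun θ : Fin n → ℝ =>
      m ^ (-(b * p)) * ((1 : ℝ) + ‖θ‖ ^ 2) ^ (-(2 * (p * b)) / 2)) := by
    apply Integrable.const_mul
    apply integrable_rpow_neg_one_add_norm_sq (r := 2 * (p * b))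
    rw [Module.finrank_fintype_fun_eq_card, Fintype.card_fin]
    linarith
  suffices h : Integrable (fun θ : Fin n → ℝ => ‖z θ‖ ^ (-(b * p))) by
    exact h.congr (Filter.Eventually.of_forall fun θ => (hF θ).symm)
  have hGc : Continuous fun θ : Fin n → ℝ => ‖z θ‖ ^ (-(b * p)) :=
    Continuous.rpow_const (continuous_norm.comp hzc)
      fun θ => Or.inl (ne_of_gt (habs_pos θ))
  refine hint.mono' hGc.aestronglyMeasurable (Filter.Eventually.of_forall fun θ => ?_)
  rw [Real.norm_eq_abs, _root_.abs_of_nonneg (Real.rpow_nonneg (norm_nonneg _) _)]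
  have hexp : -(2 * (p * b)) / 2 = -(b * p) := by ring
  rw [hexp, ← Real.mul_rpow hm0.le (by positivity)]
  exact Real.rpow_le_rpow_of_nonpos (by positivity) (hbound θ) (by nlinarith)
end
end

section
/- Let n ≥ 1, b > 0, t > 0, μ ∈ ℝ^n, and let Σ ∈ ℝ^{n×n} be a symmetric positive semidefinite matrix. Then for every θ ∈ ℝ^n, ∫_0^∞ exp(s(i⟨μ,θ⟩ − ½‖θ‖²_Σ)) · (b^{bt}/Γ(bt)) s^{bt−1} e^{−b s} ds = exp(−b t Log(1 − i⟨μ,θ⟩/b + ‖θ‖²_Σ/(2b))), where Γ is the Gamma function and Log is the principal branch of the complex logarithm. -/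
set_option maxHeartbeats 1000000

open MeasureTheory Complex

noncomputable section

section Aux
open Set


lemma aux_int {a c : ℝ} (ha : -1 < a) (hc : 0 < c) :
    IntegrableOn (fun s : ℝ => s ^ a * Real.exp (-(c * s))) (Set.Ioi 0) := by
  have h := integrableOn_rpow_mul_exp_neg_mul_rpow (p := 1) ha one_pos hc
  refine h.congr_fun (fun x hx => ?_) measurableSet_Ioi
  simp only [Real.rpow_one, neg_mul]

lemma meas_aux (c : ℂ) (f : ℝ → ℂ) (hf : Continuous f) :
    AEStronglyMeasurable (fun s : ℝ => (s:ℂ) ^ c * f s)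
      (volume.restrict (Set.Ioi 0)) := by
  apply ContinuousOn.aestronglyMeasurable _ measurableSet_Ioi
  intro x hx
  exact ((continuousAt_ofReal_cpow_const x c (Or.inr (ne_of_gt hx))).mul
    hf.continuousAt).continuousWithinAt

lemma dif_aux {a : ℝ} (ha : 0 < a) {β : ℂ} (hβ : 0 < β.re) :
    HasDerivAt (fun z : ℂ => ∫ s in Set.Ioi (0:ℝ), (s:ℂ) ^ ((a:ℂ) - 1) * Complex.exp (-(z * s)))
      (∫ s in Set.Ioi (0:ℝ), (s:ℂ) ^ ((a:ℂ) - 1) * (Complex.exp (-(β * s)) * (-(s:ℂ)))) β := by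
  have hc0 : 0 < β.re / 2 := by positivity
  have contexp : ∀ z : ℂ, Continuous (fun s : ℝ => Complex.exp (-(z * s))) := fun z =>
    Complex.continuous_exp.comp ((continuous_const.mul Complex.continuous_ofReal).neg)
  have hF_meas : ∀ᶠ z in nhds β, AEStronglyMeasurable
      (fun s : ℝ => (s:ℂ) ^ ((a:ℂ) - 1) * Complex.exp (-(z * s)))
      (volume.restrict (Set.Ioi 0)) :=
    Filter.Eventually.of_forall fun z => meas_aux _ _ (contexp z)
  have hnorm : ∀ {s : ℝ}, 0 < s → ∀ z : ℂ,
      ‖(s:ℂ) ^ ((a:ℂ) - 1) * Complex.exp (-(z * s))‖ = s ^ (a - 1) * Real.exp (-(z.re * s)) := by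
    intro s hs z
    rw [norm_mul, Complex.norm_exp,
      Complex.norm_cpow_eq_rpow_re_of_pos hs]
    have h1 : ((a:ℂ) - 1).re = a - 1 := by simp
    have h2 : (-(z * (s:ℂ))).re = -(z.re * s) := by simp
    rw [h1, h2]
  have hball : ∀ z ∈ Metric.ball β (β.re / 2), β.re / 2 ≤ z.re := by
    intro z hz
    have h1 := Complex.abs_re_le_norm (z - β)
    rw [Complex.sub_re] at h1
    have h2 : ‖z - β‖ < β.re / 2 := by
      simpa [Metric.mem_ball, Complex.dist_eq] using hz
    have h3 := (abs_lt.mp (lt_of_le_of_lt h1 h2)).1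
    linarith
  have hF_int : Integrable (fun s : ℝ => (s:ℂ) ^ ((a:ℂ) - 1) * Complex.exp (-(β * s)))
      (volume.restrict (Set.Ioi 0)) := by
    apply Integrable.mono' (aux_int (show -1 < a - 1 by linarith) hc0)
      (meas_aux _ _ (contexp β))
    filter_upwards [self_mem_ae_restrict (measurableSet_Ioi : MeasurableSet (Set.Ioi (0:ℝ)))]
      with s hs
    have hs' : (0:ℝ) < s := hs
    rw [hnorm hs' β]
    gcongr
    linarith
  have hF'_meas : AEStronglyMeasurable
      (fun s : ℝ => (s:ℂ) ^ ((a:ℂ) - 1) * (Complex.exp (-(β * s)) * (-(s:ℂ))))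
      (volume.restrict (Set.Ioi 0)) :=
    meas_aux _ _ ((contexp β).mul Complex.continuous_ofReal.neg)
  have h_bound : ∀ᵐ (s : ℝ) ∂(volume.restrict (Set.Ioi (0:ℝ))),
      ∀ z ∈ Metric.ball β (β.re / 2),
        ‖(s:ℂ) ^ ((a:ℂ) - 1) * (Complex.exp (-(z * s)) * (-(s:ℂ)))‖ ≤
          s ^ a * Real.exp (-(β.re / 2 * s)) := by
    filter_upwards [self_mem_ae_restrict (measurableSet_Ioi : MeasurableSet (Set.Ioi (0:ℝ)))]
      with s hs z hz
    have hs' : (0:ℝ) < s := hs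
    rw [show (s:ℂ) ^ ((a:ℂ) - 1) * (Complex.exp (-(z * s)) * (-(s:ℂ))) =
        ((s:ℂ) ^ ((a:ℂ) - 1) * Complex.exp (-(z * s))) * (-(s:ℂ)) by ring,
      norm_mul, hnorm hs' z]
    have habs : ‖(-(s:ℂ))‖ = s := by
      rw [norm_neg, Complex.norm_of_nonneg hs'.le]
    rw [habs]
    have hexp : Real.exp (-(z.re * s)) ≤ Real.exp (-(β.re / 2 * s)) := by
      apply Real.exp_le_exp.mpr
      have := hball z hz
      nlinarith
    calc s ^ (a - 1) * Real.exp (-(z.re * s)) * s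
        ≤ s ^ (a - 1) * Real.exp (-(β.re / 2 * s)) * s := by
          have h0 : (0:ℝ) ≤ s ^ (a - 1) := Real.rpow_nonneg hs'.le _
          exact mul_le_mul_of_nonneg_right (mul_le_mul_of_nonneg_left hexp h0) hs'.le
      _ = s ^ a * Real.exp (-(β.re / 2 * s)) := by
          rw [show s ^ (a - 1) * Real.exp (-(β.re / 2 * s)) * s =
              s ^ (a - 1) * s ^ (1:ℝ) * Real.exp (-(β.re / 2 * s)) by rw [Real.rpow_one]; ring,
            ← Real.rpow_add hs']
          ring_nf
  have h_diff : ∀ᵐ (s : ℝ) ∂(volume.restrict (Set.Ioi (0:ℝ))),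
      ∀ z ∈ Metric.ball β (β.re / 2),
        HasDerivAt (fun z : ℂ => (s:ℂ) ^ ((a:ℂ) - 1) * Complex.exp (-(z * s)))
          ((s:ℂ) ^ ((a:ℂ) - 1) * (Complex.exp (-(z * s)) * (-(s:ℂ)))) z := by
    filter_upwards with s z _
    have h1 : HasDerivAt (fun z : ℂ => -(z * (s:ℂ))) (-(s:ℂ)) z := by
      have h := ((hasDerivAt_id z).mul_const (s:ℂ)).neg
      simp only [one_mul] at h
      exact h
    exact (h1.cexp).const_mul _
  exact (hasDerivAt_integral_of_dominated_loc_of_deriv_le (Metric.ball_mem_nhds β hc0) hF_meas hF_int hF'_meas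
    h_bound (aux_int (by linarith) hc0) h_diff).2




lemma gamma_int_complex {a : ℝ} (ha : 0 < a) {β : ℂ} (hβ : 0 < β.re) :
    ∫ s in Set.Ioi (0:ℝ), (s:ℂ) ^ ((a:ℂ) - 1) * Complex.exp (-(β * s)) =
      (Real.Gamma a : ℂ) * β ^ (-(a:ℂ)) := by
  set U : Set ℂ := {z : ℂ | 0 < z.re} with hU
  have hUopen : IsOpen U := isOpen_lt continuous_const Complex.continuous_re
  have hUpre : IsPreconnected U := (convex_halfSpace_re_gt 0).isPreconnected
  set f : ℂ → ℂ := fun z => ∫ s in Set.Ioi (0:ℝ), (s:ℂ) ^ ((a:ℂ) - 1) * Complex.exp (-(z * s))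
    with hf
  set g : ℂ → ℂ := fun z => (Real.Gamma a : ℂ) * z ^ (-(a:ℂ)) with hg
  have hfa : AnalyticOnNhd ℂ f U := by
    apply DifferentiableOn.analyticOnNhd _ hUopen
    intro z hz
    exact ((dif_aux ha hz).differentiableAt).differentiableWithinAt
  have hga : AnalyticOnNhd ℂ g U := by
    apply DifferentiableOn.analyticOnNhd _ hUopen
    intro z hz
    apply DifferentiableAt.differentiableWithinAt
    apply DifferentiableAt.const_mul
    exact ((hasDerivAt_id z).cpow_const (Or.inl hz)).differentiableAt
  have hkey : ∀ r : ℝ, 0 < r → f (r : ℂ) = g (r : ℂ) := by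
    intro r hr
    have h1 := Complex.integral_cpow_mul_exp_neg_mul_Ioi
      (show 0 < ((a : ℂ)).re by simpa using ha) hr
    have h2 : f (r : ℂ) = ∫ s in Set.Ioi (0:ℝ), (s:ℂ) ^ ((a:ℂ) - 1) *
        Complex.exp (-((r:ℝ) * s : ℝ)) := by
      simp only [hf]
      congr 1 with s
      push_cast
      ring_nf
    rw [h2]
    rw [show (fun s : ℝ => (s:ℂ) ^ ((a:ℂ) - 1) * Complex.exp (-((r:ℝ) * s : ℝ))) =
      (fun s : ℝ => (s:ℂ) ^ ((a:ℂ) - 1) * Complex.exp (-((r:ℂ) * (s:ℂ)))) from funext fun s => by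
        push_cast; ring_nf] at *
    rw [h1, Complex.Gamma_ofReal, hg]
    have harg : Complex.arg (r : ℂ) ≠ Real.pi := by
      rw [Complex.arg_ofReal_of_nonneg hr.le]
      exact Real.pi_ne_zero.symm
    rw [one_div, Complex.inv_cpow _ _ harg, ← Complex.cpow_neg]
    ring
  have h1U : (1:ℂ) ∈ U := by simp [hU]
  have hu : Filter.Tendsto (fun n : ℕ => ((1 + ((n:ℝ)+1)⁻¹ : ℝ) : ℂ)) Filter.atTop
      (nhdsWithin (1:ℂ) {(1:ℂ)}ᶜ) := by
    rw [tendsto_nhdsWithin_iff]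
    constructor
    · have h0 : Filter.Tendsto (fun n : ℕ => (1 + ((n:ℝ)+1)⁻¹ : ℝ)) Filter.atTop (nhds 1) := by
        have : Filter.Tendsto (fun n : ℕ => 1 / ((n : ℝ) + 1)) Filter.atTop (nhds 0) :=
          tendsto_one_div_add_atTop_nhds_zero_nat
        simp only [one_div] at this
        simpa using (tendsto_const_nhds (x := (1:ℝ))).add this
      have h2 := (Complex.continuous_ofReal.tendsto 1).comp h0
      have h3 : (Complex.ofReal ∘ fun n : ℕ => (1 + ((n:ℝ)+1)⁻¹ : ℝ)) =
          fun n : ℕ => ((1 + ((n:ℝ)+1)⁻¹ : ℝ) : ℂ) := rfl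
      rw [h3] at h2
      simpa using h2
    · filter_upwards with n
      simp only [Set.mem_compl_iff, Set.mem_singleton_iff]
      rw [show ((1:ℂ)) = ((1:ℝ):ℂ) by norm_num, Complex.ofReal_inj]
      have : (0:ℝ) < ((n:ℝ)+1)⁻¹ := by positivity
      intro h; linarith
  have hfreq : ∃ᶠ z in nhdsWithin (1:ℂ) {(1:ℂ)}ᶜ, f z = g z :=
    hu.frequently (Filter.Frequently.of_forall fun n => hkey _ (by positivity))
  exact hfa.eqOn_of_preconnected_of_frequently_eq hga hUpre h1U hfreq hβ

end Aux

section Main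
open Set
/-- Mixing the Gaussian characteristic function `exp(s(i⟨μ,θ⟩ - ½‖θ‖²_Σ))` against the
Gamma(bt, b) density yields the variance-gamma characteristic function
`exp(-bt Log(1 - i⟨μ,θ⟩/b + ‖θ‖²_Σ/(2b)))`. -/
theorem stmt11 {n : ℕ} (hn : 1 ≤ n) (b t : ℝ) (hb : 0 < b) (ht : 0 < t)
    (μ : Fin n → ℝ) (S : Matrix (Fin n) (Fin n) ℝ) (hS : S.PosSemidef)
    (θ : Fin n → ℝ) :
    ∫ s in Set.Ioi (0 : ℝ),
        Complex.exp ((s : ℂ) * (Complex.I * (dot μ θ : ℂ) - (quad S θ : ℂ) / 2)) *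
          ((b ^ (b * t) / Real.Gamma (b * t) * s ^ (b * t - 1) *
            Real.exp (-(b * s)) : ℝ) : ℂ) =
      Complex.exp (-(b : ℂ) * (t : ℂ) * Complex.log (1 - Complex.I * (dot μ θ : ℂ) / (b : ℂ) +
        (quad S θ : ℂ) / (2 * (b : ℂ)))) := by
  set d : ℝ := dot μ θ with hd
  set q : ℝ := quad S θ with hqdef
  set a : ℝ := b * t with hadef
  have ha : 0 < a := mul_pos hb ht
  have hΓ : 0 < Real.Gamma a := Real.Gamma_pos_of_pos ha
  have hq : 0 ≤ q := by
    have h1 := hS.dotProduct_mulVec_nonneg θ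
    have h2 : q = dotProduct θ (S.mulVec θ) := by
      simp [hqdef, quad, dotProduct, Matrix.mulVec, Finset.mul_sum, mul_assoc]
    rw [h2]
    simpa using h1
  set β : ℂ := (b : ℂ) + (q : ℂ) / 2 - Complex.I * (d : ℂ) with hβdef
  have hβre : β.re = b + q / 2 := by simp [hβdef]
  have hβrepos : 0 < β.re := by rw [hβre]; positivity
  have hβne : β ≠ 0 := by
    intro h
    rw [h] at hβre
    simp at hβre
    nlinarith
  set C : ℝ := b ^ a / Real.Gamma a with hC
  -- step 1 : rewrite the integrand
  have step1 : ∫ s in Set.Ioi (0 : ℝ),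
      Complex.exp ((s : ℂ) * (Complex.I * (d : ℂ) - (q : ℂ) / 2)) *
        ((C * s ^ (a - 1) * Real.exp (-(b * s)) : ℝ) : ℂ) =
      (C : ℂ) * ((Real.Gamma a : ℂ) * β ^ (-(a:ℂ))) := by
    rw [← gamma_int_complex ha hβrepos, ← integral_const_mul]
    apply setIntegral_congr_fun measurableSet_Ioi
    intro s hs
    have hs' : (0 : ℝ) < s := hs
    have hcast : ((s ^ (a - 1) : ℝ) : ℂ) = (s : ℂ) ^ ((a:ℂ) - 1) := by
      rw [Complex.ofReal_cpow hs'.le]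
      push_cast
      ring_nf
    push_cast
    rw [hcast]
    rw [show Complex.exp ((s : ℂ) * (Complex.I * (d : ℂ) - (q : ℂ) / 2)) *
        ((C : ℂ) * (s:ℂ) ^ ((a:ℂ) - 1) * Complex.exp (-((b:ℂ) * (s:ℂ)))) =
        (C : ℂ) * ((s:ℂ) ^ ((a:ℂ) - 1) *
          (Complex.exp ((s : ℂ) * (Complex.I * (d : ℂ) - (q : ℂ) / 2)) *
           Complex.exp (-((b:ℂ) * (s:ℂ))))) from by ring]
    rw [← Complex.exp_add]
    congr 2
    rw [hβdef]
    ring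
  -- step 2 : the right-hand side
  have hw : 1 - Complex.I * (d : ℂ) / (b : ℂ) + (q : ℂ) / (2 * (b : ℂ)) =
      β * ((b⁻¹ : ℝ) : ℂ) := by
    have hbne : (b : ℂ) ≠ 0 := Complex.ofReal_ne_zero.mpr hb.ne'
    rw [hβdef]
    push_cast
    field_simp
    ring
  have hlog : Complex.log (1 - Complex.I * (d : ℂ) / (b : ℂ) + (q : ℂ) / (2 * (b : ℂ))) =
      (Real.log b⁻¹ : ℂ) + Complex.log β := by
    rw [hw, Complex.log_mul_ofReal b⁻¹ (inv_pos.mpr hb) β hβne]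
  calc ∫ s in Set.Ioi (0 : ℝ),
        Complex.exp ((s : ℂ) * (Complex.I * (d : ℂ) - (q : ℂ) / 2)) *
          ((C * s ^ (a - 1) * Real.exp (-(b * s)) : ℝ) : ℂ)
      = (C : ℂ) * ((Real.Gamma a : ℂ) * β ^ (-(a:ℂ))) := step1
    _ = ((b ^ a : ℝ) : ℂ) * β ^ (-(a:ℂ)) := by
        have hΓc : ((Real.Gamma a : ℝ) : ℂ) ≠ 0 := Complex.ofReal_ne_zero.mpr hΓ.ne'
        rw [hC]
        push_cast
        field_simp
    _ = Complex.exp (-(b : ℂ) * (t : ℂ) *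
          Complex.log (1 - Complex.I * (d : ℂ) / (b : ℂ) + (q : ℂ) / (2 * (b : ℂ)))) := by
        rw [hlog, show -(b:ℂ) * (t:ℂ) * ((Real.log b⁻¹ : ℂ) + Complex.log β) =
          -(b:ℂ) * (t:ℂ) * (Real.log b⁻¹ : ℂ) + Complex.log β * (-(a:ℂ)) from by
            rw [hadef]; push_cast; ring]
        rw [Complex.exp_add, ← Complex.cpow_def_of_ne_zero hβne]
        congr 1
        rw [Real.log_inv]
        rw [show -(b:ℂ) * (t:ℂ) * ((-Real.log b : ℝ) : ℂ) = (((a * Real.log b : ℝ)) : ℂ) from by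
          rw [hadef]; push_cast; ring]
        rw [← Complex.ofReal_exp]
        norm_cast
        rw [Real.rpow_def_of_pos hb]
        ring_nf

end Main
end
end

section
/- Let a > 0 and b > 0, and let z ∈ ℂ with Re z ≤ 0. Then ∫_0^∞ (e^{s z} − 1) · a s^{−1} e^{−b s} ds = −a Log(1 − z/b), where Log is the principal branch of the complex logarithm (well defined since Re(1 − z/b) ≥ 1), and the integrand is absolutely integrable on (0,∞). -/
open MeasureTheory Complex Filter

noncomputable section

lemma aux_ofReal_hasDerivAt (t : ℝ) : HasDerivAt (fun u : ℝ => (u : ℂ)) 1 t := by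
  simpa using (hasDerivAt_id t).ofReal_comp

lemma aux_cexp_integrableOn {c : ℂ} (hc : c.re < 0) :
    IntegrableOn (fun s : ℝ => Complex.exp (c * s)) (Set.Ioi 0) := by
  apply Integrable.mono' ((exp_neg_integrableOn_Ioi 0 (b := -c.re) (by linarith)))
  · exact (Complex.continuous_exp.comp (by fun_prop)).aestronglyMeasurable
  · filter_upwards with s
    rw [Complex.norm_exp]
    simp [Complex.mul_re]

lemma aux_integral_cexp_Ioi {c : ℂ} (hc : c.re < 0) :
    ∫ s in Set.Ioi (0 : ℝ), Complex.exp (c * s) = -c⁻¹ := by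
  have hc0 : c ≠ 0 := fun h => by simp [h] at hc
  have key := MeasureTheory.integral_Ioi_of_hasDerivAt_of_tendsto
    (f := fun s : ℝ => c⁻¹ * Complex.exp (c * s))
    (f' := fun s : ℝ => Complex.exp (c * s)) (a := 0) (m := 0)
    (Continuous.continuousWithinAt (by fun_prop))
    (fun x _ => by
      have h1 : HasDerivAt (fun s : ℝ => c * (s : ℂ)) c x := by
        simpa using (aux_ofReal_hasDerivAt x).const_mul c
      have := (h1.cexp).const_mul c⁻¹
      refine this.congr_deriv ?_
      rw [mul_comm (Complex.exp _) c, ← mul_assoc, inv_mul_cancel₀ hc0, one_mul])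
    (aux_cexp_integrableOn hc)
    ?_
  · simpa using key
  · rw [tendsto_zero_iff_norm_tendsto_zero]
    have h2 : Tendsto (fun s : ℝ => (-c.re) * s) atTop atTop :=
      Tendsto.const_mul_atTop (by linarith) tendsto_id
    have h3 : Tendsto (fun s : ℝ => ‖c⁻¹‖ * Real.exp (-((-c.re) * s))) atTop (nhds 0) := by
      simpa using ((Real.tendsto_exp_neg_atTop_nhds_zero.comp h2).const_mul ‖c⁻¹‖)
    convert h3 using 2 with s
    rw [norm_mul, Complex.norm_exp]
    simp [Complex.mul_re]

lemma aux_norm_cexp_sub_one_le {w : ℂ} (hw : w.re ≤ 0) : ‖Complex.exp w - 1‖ ≤ ‖w‖ := by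
  have key : ∫ t in (0:ℝ)..1, w * Complex.exp ((t : ℂ) * w) = Complex.exp w - 1 := by
    have := intervalIntegral.integral_eq_sub_of_hasDerivAt
      (f := fun t : ℝ => Complex.exp ((t : ℂ) * w))
      (f' := fun t : ℝ => w * Complex.exp ((t : ℂ) * w)) (a := 0) (b := 1)
      (fun x _ => by
        have h1 : HasDerivAt (fun t : ℝ => (t : ℂ) * w) w x := by
          simpa using (aux_ofReal_hasDerivAt x).mul_const w
        simpa [mul_comm] using h1.cexp)
      ((continuous_const.mul (Complex.continuous_exp.comp (Complex.continuous_ofReal.mul continuous_const))).intervalIntegrable 0 1)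
    simpa using this
  rw [← key]
  have h := intervalIntegral.norm_integral_le_of_norm_le_const (C := ‖w‖)
    (f := fun t : ℝ => w * Complex.exp ((t : ℂ) * w)) (a := 0) (b := 1) ?_
  · simpa using h
  · intro t ht
    rw [Set.uIoc_of_le zero_le_one] at ht
    rw [norm_mul, Complex.norm_exp]
    have : ((t : ℂ) * w).re = t * w.re := by simp [Complex.mul_re]
    rw [this]
    nlinarith [Real.exp_le_one_iff.mpr (mul_nonpos_of_nonneg_of_nonpos ht.1.le hw),
      norm_nonneg w, Real.exp_pos (t * w.re)]

/-- Frullani-type integral for the gamma subordinator Lévy measure `a s⁻¹ e^{-bs} ds`: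
for `Re z ≤ 0`, the integrand `(e^{sz} - 1) a s⁻¹ e^{-bs}` is absolutely integrable on
`(0,∞)` and its integral equals `-a Log(1 - z/b)`. -/
theorem stmt12 (a b : ℝ) (ha : 0 < a) (hb : 0 < b) (z : ℂ) (hz : z.re ≤ 0) :
    IntegrableOn (fun s : ℝ =>
        (Complex.exp ((s : ℂ) * z) - 1) * ((a * s⁻¹ * Real.exp (-(b * s)) : ℝ) : ℂ))
      (Set.Ioi 0) ∧
    ∫ s in Set.Ioi (0 : ℝ),
        (Complex.exp ((s : ℂ) * z) - 1) * ((a * s⁻¹ * Real.exp (-(b * s)) : ℝ) : ℂ) =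
      -(a : ℂ) * Complex.log (1 - z / (b : ℂ)) := by
  have hb0 : (b : ℂ) ≠ 0 := by exact_mod_cast hb.ne'
  -- Part 1: integrability
  have hint : IntegrableOn (fun s : ℝ =>
      (Complex.exp ((s : ℂ) * z) - 1) * ((a * s⁻¹ * Real.exp (-(b * s)) : ℝ) : ℂ))
      (Set.Ioi 0) := by
    apply Integrable.mono' ((exp_neg_integrableOn_Ioi 0 hb).const_mul (a * ‖z‖))
    · apply Measurable.aestronglyMeasurable
      fun_prop
    · filter_upwards [ae_restrict_mem measurableSet_Ioi] with s hs
      have hs0 : (0:ℝ) < s := hs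
      have hre : ((s : ℂ) * z).re ≤ 0 := by
        have : ((s : ℂ) * z).re = s * z.re := by simp [Complex.mul_re]
        rw [this]; exact mul_nonpos_of_nonneg_of_nonpos hs0.le hz
      have h1 : ‖Complex.exp ((s : ℂ) * z) - 1‖ ≤ s * ‖z‖ := by
        have := aux_norm_cexp_sub_one_le hre
        simpa [abs_of_pos hs0] using this
      have h2 : ‖((a * s⁻¹ * Real.exp (-(b * s)) : ℝ) : ℂ)‖
          = a * s⁻¹ * Real.exp (-(b * s)) := by
        rw [Complex.norm_real, Real.norm_of_nonneg (by positivity)]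
      calc ‖(Complex.exp ((s : ℂ) * z) - 1) * ((a * s⁻¹ * Real.exp (-(b * s)) : ℝ) : ℂ)‖
          = ‖Complex.exp ((s : ℂ) * z) - 1‖ * (a * s⁻¹ * Real.exp (-(b * s))) := by
            rw [norm_mul, h2]
        _ ≤ (s * ‖z‖) * (a * s⁻¹ * Real.exp (-(b * s))) := by
            apply mul_le_mul_of_nonneg_right h1 (by positivity)
        _ = a * ‖z‖ * Real.exp (-b * s) := by
            rw [neg_mul]; field_simp
  refine ⟨hint, ?_⟩
  rcases eq_or_ne z 0 with rfl | hz0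
  · simp
  -- Fubini setup
  set g : ℝ → ℝ → ℂ := fun s t => (a : ℂ) * z * Complex.exp (((t : ℂ) * z - b) * s) with hg
  have hprod : Integrable (Function.uncurry g)
      ((volume.restrict (Set.Ioi (0:ℝ))).prod (volume.restrict (Set.Ioc (0:ℝ) 1))) := by
    apply Integrable.mono'
      (g := fun p : ℝ × ℝ => (a * ‖z‖) * Real.exp (-b * p.1))
    · have h1 : Integrable (fun s : ℝ => (a * ‖z‖) * Real.exp (-b * s))
          (volume.restrict (Set.Ioi (0:ℝ))) :=
        (exp_neg_integrableOn_Ioi 0 hb).const_mul (a * ‖z‖)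
      have h2 : Integrable (fun _ : ℝ => (1:ℝ)) (volume.restrict (Set.Ioc (0:ℝ) 1)) :=
        integrable_const 1
      simpa using h1.mul_prod h2
    · apply Continuous.aestronglyMeasurable
      unfold g
      apply continuous_const.mul
      exact Complex.continuous_exp.comp (by fun_prop)
    · rw [Measure.prod_restrict]
      filter_upwards [ae_restrict_mem (measurableSet_Ioi.prod measurableSet_Ioc)] with p hp
      obtain ⟨hp1, hp2⟩ := hp
      have hre : ((((p.2 : ℂ)) * z - b) * p.1).re ≤ -b * p.1 := by
        have : ((((p.2 : ℂ)) * z - b) * p.1).re = (p.2 * z.re - b) * p.1 := by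
          simp [Complex.mul_re, Complex.sub_re]
        rw [this]
        have h3 : p.2 * z.re ≤ 0 := mul_nonpos_of_nonneg_of_nonpos hp2.1.le hz
        nlinarith [le_of_lt (Set.mem_Ioi.mp hp1)]
      calc ‖g p.1 p.2‖ = (a * ‖z‖) * Real.exp (((((p.2 : ℂ)) * z - b) * p.1).re) := by
            rw [hg]
            rw [norm_mul, Complex.norm_exp]
            simp [abs_of_pos ha]
        _ ≤ (a * ‖z‖) * Real.exp (-b * p.1) := by
            apply mul_le_mul_of_nonneg_left (Real.exp_le_exp.mpr hre) (by positivity)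
  -- step 1 : pointwise identity on Ioi 0
  have hf_eq : Set.EqOn (fun s : ℝ =>
      (Complex.exp ((s : ℂ) * z) - 1) * ((a * s⁻¹ * Real.exp (-(b * s)) : ℝ) : ℂ))
      (fun s : ℝ => ∫ t in Set.Ioc (0:ℝ) 1, g s t) (Set.Ioi 0) := by
    intro s hs
    have hs0 : (0:ℝ) < s := hs
    have hsC : (s : ℂ) ≠ 0 := by exact_mod_cast hs0.ne'
    have hFTC : ∫ t in (0:ℝ)..1, g s t
        = (a : ℂ) * (s : ℂ)⁻¹ * Complex.exp (((1:ℂ) * z - b) * s)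
          - (a : ℂ) * (s : ℂ)⁻¹ * Complex.exp (((0:ℂ) * z - b) * s) := by
      have := intervalIntegral.integral_eq_sub_of_hasDerivAt
        (f := fun t : ℝ => (a : ℂ) * (s : ℂ)⁻¹ * Complex.exp (((t : ℂ) * z - b) * s))
        (f' := fun t : ℝ => g s t) (a := 0) (b := 1)
        (fun x _ => by
          have h1 : HasDerivAt (fun t : ℝ => ((t : ℂ) * z - b) * s) (z * s) x := by
            have h0 : HasDerivAt (fun t : ℝ => (t : ℂ) * z) z x := by
              simpa using (aux_ofReal_hasDerivAt x).mul_const z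
            simpa using (h0.sub_const (b : ℂ)).mul_const (s : ℂ)
          have := (h1.cexp).const_mul ((a : ℂ) * (s : ℂ)⁻¹)
          refine this.congr_deriv ?_
          rw [hg]
          field_simp)
        ((continuous_const.mul (Complex.continuous_exp.comp
          ((Complex.continuous_ofReal.mul continuous_const).sub continuous_const |>.mul
            continuous_const))).intervalIntegrable 0 1)
      simpa using this
    show (Complex.exp ((s : ℂ) * z) - 1) * ((a * s⁻¹ * Real.exp (-(b * s)) : ℝ) : ℂ)
        = ∫ t in Set.Ioc (0:ℝ) 1, g s t
    rw [← intervalIntegral.integral_of_le zero_le_one, hFTC]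
    have e1 : ((1:ℂ) * z - b) * s = (s : ℂ) * z + (-(b * s) : ℝ) := by push_cast; ring
    have e0 : ((0:ℂ) * z - b) * s = ((-(b * s) : ℝ) : ℂ) := by push_cast; ring
    rw [e1, e0, Complex.exp_add, ← Complex.ofReal_exp]
    push_cast
    field_simp
  -- step 2 : inner integral in s
  have hinner : Set.EqOn (fun t : ℝ => ∫ s in Set.Ioi (0:ℝ), g s t)
      (fun t : ℝ => (a : ℂ) * z * ((b : ℂ) - t * z)⁻¹) (Set.Ioc 0 1) := by
    intro t ht
    have hre : ((t : ℂ) * z - b).re < 0 := by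
      have : ((t : ℂ) * z - b).re = t * z.re - b := by simp [Complex.mul_re, Complex.sub_re]
      rw [this]
      have := mul_nonpos_of_nonneg_of_nonpos ht.1.le hz
      linarith
    show ∫ s in Set.Ioi (0:ℝ), g s t = _
    rw [hg]
    simp only
    rw [MeasureTheory.integral_const_mul, aux_integral_cexp_Ioi hre]
    rw [← inv_neg, neg_sub]
  -- assemble
  calc ∫ s in Set.Ioi (0 : ℝ),
        (Complex.exp ((s : ℂ) * z) - 1) * ((a * s⁻¹ * Real.exp (-(b * s)) : ℝ) : ℂ)
      = ∫ s in Set.Ioi (0:ℝ), ∫ t in Set.Ioc (0:ℝ) 1, g s t :=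
        setIntegral_congr_fun measurableSet_Ioi hf_eq
    _ = ∫ t in Set.Ioc (0:ℝ) 1, ∫ s in Set.Ioi (0:ℝ), g s t :=
        MeasureTheory.integral_integral_swap hprod
    _ = ∫ t in Set.Ioc (0:ℝ) 1, (a : ℂ) * z * ((b : ℂ) - t * z)⁻¹ :=
        setIntegral_congr_fun measurableSet_Ioc hinner
    _ = -(a : ℂ) * Complex.log (1 - z / (b : ℂ)) := by
        rw [← intervalIntegral.integral_of_le zero_le_one]
        have hslit : ∀ t : ℝ, t ∈ Set.uIcc (0:ℝ) 1 → (0:ℝ) < ((b : ℂ) - t * z).re := by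
          intro t ht
          rw [Set.uIcc_of_le zero_le_one] at ht
          have : ((b : ℂ) - t * z).re = b - t * z.re := by
            simp [Complex.sub_re, Complex.mul_re]
          rw [this]
          have := mul_nonpos_of_nonneg_of_nonpos ht.1 hz
          linarith
        have hFTC := intervalIntegral.integral_eq_sub_of_hasDerivAt
          (f := fun t : ℝ => -(a : ℂ) * Complex.log ((b : ℂ) - t * z))
          (f' := fun t : ℝ => (a : ℂ) * z * ((b : ℂ) - t * z)⁻¹) (a := 0) (b := 1)
          (fun x hx => by
            have h0 : HasDerivAt (fun t : ℝ => (b : ℂ) - (t : ℂ) * z) (-z) x := by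
              have h00 : HasDerivAt (fun t : ℝ => (t : ℂ) * z) z x := by
                simpa using (aux_ofReal_hasDerivAt x).mul_const z
              simpa using h00.const_sub (b : ℂ)
            have hmem : (b : ℂ) - (x : ℂ) * z ∈ Complex.slitPlane :=
              Complex.mem_slitPlane_iff.mpr (Or.inl (hslit x hx))
            have := ((Complex.hasDerivAt_log hmem).comp x h0).const_mul (-(a : ℂ))
            refine this.congr_deriv ?_
            ring)
          ?_
        · rw [hFTC]
          have hne1 : (1 : ℂ) - z / b ≠ 0 := by
            intro h
            have : ((1:ℂ) - z / b).re = 1 - z.re / b := by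
              simp [Complex.sub_re, Complex.div_ofReal_re]
            rw [h] at this
            simp at this
            have : z.re / b ≤ 0 := div_nonpos_of_nonpos_of_nonneg hz hb.le
            linarith
          have hfact : (b : ℂ) - z = (b : ℝ) * ((1:ℂ) - z / b) := by
            field_simp
          have hlog : Complex.log ((b : ℂ) - z)
              = Real.log b + Complex.log (1 - z / b) := by
            rw [hfact, Complex.log_ofReal_mul hb hne1]
          have hlogb : Complex.log ((b : ℂ)) = (Real.log b : ℂ) :=
            (Complex.ofReal_log hb.le).symm
          simp only [Complex.ofReal_zero, zero_mul, sub_zero, Complex.ofReal_one, one_mul]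
          rw [hlog, hlogb]
          ring
        · apply ContinuousOn.intervalIntegrable
          apply continuousOn_const.mul
          apply ContinuousOn.inv₀
          · fun_prop
          · intro t ht
            intro h
            have := hslit t ht
            rw [h] at this
            simp at this
end
end
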